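/- Liao's sifting lemma (function version): Let X be a compact metric space, f : X → X a continuous map, and φ : X → ℝ a continuous strictly positive function. Assume: (1) there is a point b ∈ X with ∏_{k=0}^{n-1} φ(f^k b) ≥ 1 for all n ≥ 1; (2) there are constants λ₁, λ₂ with 0 < λ₁ < λ₂ < 1 such that every point x ∈ X satisfying ∏_{k=0}^{n-1} φ(f^k x) ≥ λ₂^n for all n ≥ 1 has a point c ∈ ω(x) with ∏_{k=0}^{n-1} φ(f^k c) ≤ λ₁^n for all n ≥ 1. Then for every λ₃ ∈ (λ₂, 1) and every l ∈ ℕ there exist positive integers n₁ < n₂ < ⋯ < n_l such that for every j ∈ {1,…,l−1} and every k with n_j + 1 ≤ k ≤ n_{j+1}, one has ∏_{i=n_j}^{k-1} φ(f^i b) ≤ λ₃^{k-n_j} and ∏_{i=k-1}^{n_{j+1}-1} φ(f^i b) ≥ λ₂^{n_{j+1}-k+1}. -/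

import Mathlib

open Filter Topology Finset

attribute [local instance 0] Classical.propDecidable

namespace LiaoSift

/-- last argmax of `σ` over `Icc I t`. -/
lemma exists_last_argmax (σ : ℕ → ℝ) (I t : ℕ) (hIt : I ≤ t) :
    ∃ q, I ≤ q ∧ q ≤ t ∧ (∀ k, I ≤ k → k ≤ t → σ k ≤ σ q) ∧
      (∀ k, q < k → k ≤ t → σ k < σ q) := by
  induction t with
  | zero =>
      refine ⟨I, le_rfl, hIt, ?_, ?_⟩
      · intro k h1 h2
        have : k = I := by omega
        simp [this]
      · intro k h1 h2; omega
  | succ t ih =>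
      by_cases hIt' : I ≤ t
      · obtain ⟨q, hq1, hq2, hq3, hq4⟩ := ih hIt'
        by_cases hcmp : σ (t+1) < σ q
        · refine ⟨q, hq1, by omega, ?_, ?_⟩
          · intro k h1 h2
            rcases Nat.lt_succ_iff_lt_or_eq.mp (Nat.lt_succ_of_le h2) with h | h
            · exact hq3 k h1 (by omega)
            · subst h; exact hcmp.le
          · intro k h1 h2
            rcases Nat.lt_succ_iff_lt_or_eq.mp (Nat.lt_succ_of_le h2) with h | h
            · exact hq4 k h1 (by omega)
            · subst h; exact hcmp
        · push_neg at hcmp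
          refine ⟨t+1, by omega, le_rfl, ?_, ?_⟩
          · intro k h1 h2
            rcases Nat.lt_succ_iff_lt_or_eq.mp (Nat.lt_succ_of_le h2) with h | h
            · exact le_trans (hq3 k h1 (by omega)) hcmp
            · subst h; exact le_rfl
          · intro k h1 h2; omega
      · have : I = t + 1 := by omega
        subst this
        refine ⟨t+1, le_rfl, le_rfl, ?_, ?_⟩
        · intro k h1 h2
          have : k = t+1 := by omega
          simp [this]
        · intro k h1 h2; omega

/-- interior points below the base, from minimality of the record. -/
lemma cap_of_min (T : ℕ → ℝ) (u v : ℕ)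
    (hmin : ∀ m, u < m → m < v → ∃ k, u ≤ k ∧ k < m ∧ T m < T k) :
    ∀ k, u ≤ k → k < v → T k ≤ T u := by
  intro k
  induction k using Nat.strong_induction_on with
  | _ k ih =>
    intro hk1 hk2
    rcases eq_or_lt_of_le hk1 with h | h
    · exact le_of_eq (by rw [h])
    · obtain ⟨k', h1, h2, h3⟩ := hmin k h hk2
      exact le_of_lt (lt_of_lt_of_le h3 (ih k' h2 h1 (by omega)))

lemma locate (r : ℕ → ℕ) (h0 : r 0 = 0) (hlt : ∀ i, r i < r (i+1)) (k : ℕ) :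
    ∃ i, r i ≤ k ∧ k < r (i+1) := by
  classical
  have hmono : ∀ j, j ≤ r j := by
    intro j
    induction j with
    | zero => omega
    | succ j ih => have := hlt j; omega
  have hub : ∃ j, k < r j := ⟨k+1, by have := hmono (k+1); omega⟩
  have hj : k < r (Nat.find hub) := Nat.find_spec hub
  have hj0 : Nat.find hub ≠ 0 := by
    intro h; rw [h, h0] at hj; omega
  obtain ⟨i, hi⟩ := Nat.exists_eq_succ_of_ne_zero hj0
  refine ⟨i, ?_, ?_⟩
  · have := Nat.find_min hub (m := i) (by omega)
    omega
  · rw [hi] at hj; exact hj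

/-- The abstract staircase lemma. `σ i` is the "λ₃-level" of the `i`-th record,
`g i` the gap between consecutive records. -/
lemma stair_abstract (σ : ℕ → ℝ) (g : ℕ → ℕ) (C β : ℝ) (hβ : 0 < β) (hC : 0 ≤ C)
    (hstep : ∀ i, σ (i+1) ≤ σ i + C - (g i : ℝ) * β)
    (hP : ∀ G : ℕ, ∃ Z : ℕ, ∀ I M : ℕ, (∀ t, I ≤ t → t < I + M → g t ≤ G) → M ≤ Z)
    (L : ℕ) :
    ∃ F : ℕ, ∀ I : ℕ, ∃ s : ℕ → ℕ,
      (∀ j, j < L → I ≤ s j ∧ s j ≤ I + F) ∧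
      (∀ j, j + 1 < L → s j < s (j + 1)) ∧
      (∀ j, j + 1 < L → ∀ t, s j < t → t ≤ s (j + 1) → σ t ≤ σ (s j)) := by
  have htel : ∀ u v, u ≤ v → σ v ≤ σ u + ((v - u : ℕ) : ℝ) * C
      - β * ∑ k ∈ Finset.Ico u v, (g k : ℝ) := by
    intro u v huv
    induction v, huv using Nat.le_induction with
    | base => simp
    | succ v hv ih =>
        have h1 := hstep v
        have hs : ∑ k ∈ Finset.Ico u (v+1), (g k : ℝ)
            = (∑ k ∈ Finset.Ico u v, (g k : ℝ)) + g v := by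
          rw [Finset.sum_Ico_succ_top hv]
        have hc : ((v + 1 - u : ℕ) : ℝ) = ((v - u : ℕ) : ℝ) + 1 := by
          have : v + 1 - u = (v - u) + 1 := by omega
          rw [this]; push_cast; ring
        rw [hs, hc]
        nlinarith [h1, ih]
  induction L with
  | zero =>
      exact ⟨0, fun I => ⟨fun _ => I, by omega, by omega, by omega⟩⟩
  | succ L ih =>
      obtain ⟨F, hF⟩ := ih
      set Gs : ℕ := Nat.ceil (((F : ℝ) + 1) * C / β) with hGs
      obtain ⟨Z, hZ⟩ := hP Gs
      refine ⟨Z + F + 2, fun I => ?_⟩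
      by_contra hno
      push_neg at hno
      have hgap : ∀ t, I ≤ t → t ≤ I + Z → g t ≤ Gs := by
        intro t ht1 ht2
        obtain ⟨q, hq1, hq2, hq3, hq4⟩ := exists_last_argmax σ I t ht1
        set J : ℕ := I + (Z + F + 2) with hJ
        -- key helper: if everything in (q, q+1+F] lies strictly below σ q, contradiction.
        have hqJ : q + 1 + F ≤ J := by omega
        have hbuild : ¬ (∀ m, q < m → m ≤ q + 1 + F → σ m < σ q) := by
          intro hdom
          obtain ⟨s, hs1, hs2, hs3⟩ := hF (q + 1)
          set s' : ℕ → ℕ := fun j => if j = 0 then q else s (j - 1) with hs'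
          have hs'0 : s' 0 = q := by simp [hs']
          have hs'succ : ∀ j, s' (j+1) = s j := by intro j; simp [hs']
          have hbounds : ∀ j, j < L + 1 → I ≤ s' j ∧ s' j ≤ J := by
            intro j hj
            rcases j with _ | j'
            · rw [hs'0]; omega
            · rw [hs'succ j']
              obtain ⟨h1, h2⟩ := hs1 j' (by omega)
              omega
          have hstrict : ∀ j, j + 1 < L + 1 → s' j < s' (j+1) := by
            intro j hj
            rcases j with _ | j'
            · rw [hs'0, hs'succ 0]
              have : q + 1 ≤ s 0 := (hs1 0 (by omega)).1
              omega
            · rw [hs'succ j', hs'succ (j'+1)]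
              exact hs2 j' (by omega)
          obtain ⟨j, hj, t', ht'1, ht'2, hviol⟩ := hno s' hbounds hstrict
          rcases j with _ | j'
          · rw [hs'0] at ht'1 hviol
            rw [hs'succ 0] at ht'2
            have hs0 : s 0 ≤ q + 1 + F := (hs1 0 (by omega)).2
            exact absurd hviol (not_lt.mpr (hdom t' ht'1 (by omega)).le)
          · rw [hs'succ j'] at ht'1 hviol
            rw [hs'succ (j'+1)] at ht'2
            have := hs3 j' (by omega) t' ht'1 ht'2
            exact absurd hviol (not_lt.mpr this)
        by_cases hE : ∃ m, q < m ∧ m ≤ J ∧ σ q ≤ σ m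
        · classical
          have hspec := Nat.find_spec hE
          set E : ℕ := Nat.find hE with hEdef
          obtain ⟨hE1, hE2, hE3⟩ := hspec
          have hEint : ∀ m, q < m → m < E → σ m < σ q := by
            intro m h1 h2
            have := Nat.find_min hE (hEdef ▸ h2)
            push_neg at this
            exact this h1 (by omega)
          have hEgt : t < E := by
            by_contra hc
            push_neg at hc
            have := hq4 E hE1 hc
            linarith
          have hEnear : E ≤ q + F + 1 := by
            by_contra hfar
            push_neg at hfar
            exact hbuild (fun m h1 h2 => hEint m h1 (by omega))
          have htel1 := htel q E (by omega)
          have hsum : (g t : ℝ) ≤ ∑ k ∈ Finset.Ico q E, (g k : ℝ) := by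
            refine Finset.single_le_sum (f := fun k => (g k : ℝ)) ?_ ?_
            · intro i _; positivity
            · simp only [Finset.mem_Ico]; omega
          have hEq : ((E - q : ℕ) : ℝ) ≤ (F : ℝ) + 1 := by
            have : E - q ≤ F + 1 := by omega
            exact_mod_cast this
          have hkey : (g t : ℝ) * β ≤ ((F : ℝ) + 1) * C := by
            have hsn : (0:ℝ) ≤ ∑ k ∈ Finset.Ico q E, (g k : ℝ) :=
              Finset.sum_nonneg (fun i _ => by positivity)
            nlinarith [hsum, hE3, htel1, hEq, hsn]
          have h1 : (g t : ℝ) ≤ ((F : ℝ) + 1) * C / β := by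
            rw [le_div_iff₀ hβ]; exact hkey
          have h2 : (g t : ℝ) ≤ (Gs : ℝ) := h1.trans (Nat.le_ceil _)
          exact_mod_cast h2
        · push_neg at hE
          exact absurd (fun m h1 h2 => hE m h1 (by omega)) hbuild
      have := hZ I (Z + 1) (fun t ht1 ht2 => hgap t ht1 (by omega))
      omega

end LiaoSift


/-- The omega-limit set of a point `x` under a map `f`: the set of points `y` such
that `f^[n k] x → y` for some sequence of integers `n k → ∞`. -/
def omegaSet {X : Type*} [TopologicalSpace X] (f : X → X) (x : X) : Set X :=
  {y | ∃ n : ℕ → ℕ, Filter.Tendsto n Filter.atTop Filter.atTop ∧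
    Filter.Tendsto (fun k => f^[n k] x) Filter.atTop (nhds y)}

set_option maxHeartbeats 1000000 in
/-- **Liao's sifting lemma (function version).** Let `X` be a compact metric
space, `f : X → X` continuous and `φ : X → ℝ` continuous and strictly positive.
Assume (1) there is `b` with `∏_{k=0}^{n-1} φ(f^k b) ≥ 1` for all `n ≥ 1`;
(2) there are `0 < λ₁ < λ₂ < 1` such that every `x` with
`∏_{k=0}^{n-1} φ(f^k x) ≥ λ₂^n` for all `n ≥ 1` has a point `c ∈ ω(x)` with
`∏_{k=0}^{n-1} φ(f^k c) ≤ λ₁^n` for all `n ≥ 1`. Then for every `λ₃ ∈ (λ₂, 1)`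
and every `l` there are positive integers `n 0 < n 1 < ⋯ < n (l-1)` such that for
every `j` with `j + 1 < l` (i.e. each consecutive pair among the `l` integers)
and every `k` with `n j + 1 ≤ k ≤ n (j+1)`:
`∏_{i=n j}^{k-1} φ(f^i b) ≤ λ₃^(k - n j)` and
`∏_{i=k-1}^{n (j+1) - 1} φ(f^i b) ≥ λ₂^(n (j+1) - k + 1)`. -/
theorem liao_sifting_lemma {X : Type*} [MetricSpace X] [CompactSpace X]
    (f : X → X) (hf : Continuous f)
    (φ : X → ℝ) (hφc : Continuous φ) (hφ : ∀ x, 0 < φ x)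
    (b : X) (hb : ∀ n : ℕ, 1 ≤ n → 1 ≤ ∏ k ∈ Finset.range n, φ (f^[k] b))
    (lam₁ lam₂ : ℝ) (hlam₁ : 0 < lam₁) (h12 : lam₁ < lam₂) (h21 : lam₂ < 1)
    (tilde : ∀ x : X,
      (∀ n : ℕ, 1 ≤ n → lam₂ ^ n ≤ ∏ k ∈ Finset.range n, φ (f^[k] x)) →
      ∃ c ∈ omegaSet f x,
        ∀ n : ℕ, 1 ≤ n → ∏ k ∈ Finset.range n, φ (f^[k] c) ≤ lam₁ ^ n)
    (lam₃ : ℝ) (h23 : lam₂ < lam₃) (h31 : lam₃ < 1) (l : ℕ) :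
    ∃ n : ℕ → ℕ, StrictMono n ∧ 0 < n 0 ∧
      ∀ j : ℕ, j + 1 < l → ∀ k : ℕ, n j + 1 ≤ k → k ≤ n (j + 1) →
        (∏ i ∈ Finset.Icc (n j) (k - 1), φ (f^[i] b)) ≤ lam₃ ^ (k - n j) ∧
        lam₂ ^ (n (j + 1) - k + 1) ≤
          ∏ i ∈ Finset.Icc (k - 1) (n (j + 1) - 1), φ (f^[i] b) := by
  classical
  have hlam₂ : 0 < lam₂ := lt_trans hlam₁ h12
  have hlam₃ : 0 < lam₃ := lt_trans hlam₂ h23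
  -- Birkhoff sums of log φ
  set gS : ℕ → X → ℝ := fun n x => ∑ i ∈ Finset.range n, Real.log (φ (f^[i] x)) with hgS
  have hgcont : ∀ n, Continuous (gS n) := by
    intro n
    apply continuous_finset_sum
    intro i _
    exact (hφc.comp (hf.iterate i)).log (fun x => (hφ _).ne')
  have hglog : ∀ (x : X) (n : ℕ),
      gS n x = Real.log (∏ k ∈ Finset.range n, φ (f^[k] x)) := by
    intro x n
    rw [Real.log_prod (fun k _ => (hφ _).ne')]
  have hprodpos : ∀ (x : X) (n : ℕ), 0 < ∏ k ∈ Finset.range n, φ (f^[k] x) :=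
    fun x n => Finset.prod_pos (fun k _ => hφ _)
  have hIco : ∀ (x : X) (u v : ℕ), u ≤ v →
      gS v x - gS u x = ∑ i ∈ Finset.Ico u v, Real.log (φ (f^[i] x)) := by
    intro x u v huv
    have h := Finset.sum_Ico_consecutive (fun i => Real.log (φ (f^[i] x)))
      (Nat.zero_le u) huv
    simp only [hgS]
    simp only [Finset.range_eq_Ico]
    linarith [h]
  have hgshift : ∀ (x : X) (u n : ℕ), gS n (f^[u] x) = gS (u + n) x - gS u x := by
    intro x u n
    rw [hIco x u (u + n) (Nat.le_add_right u n)]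
    rw [Finset.sum_Ico_eq_sum_range]
    simp only [Nat.add_sub_cancel_left]
    simp only [hgS]
    refine Finset.sum_congr rfl ?_
    intro i _
    rw [← Function.iterate_add_apply, Nat.add_comm]
  -- the maximum of log φ
  have hnex : Nonempty X := ⟨b⟩
  obtain ⟨xm, -, hxm⟩ := isCompact_univ.exists_isMaxOn
    Set.univ_nonempty hφc.continuousOn
  set μ₂ : ℝ := Real.log lam₂ with hμ₂
  set μ₃ : ℝ := Real.log lam₃ with hμ₃
  have hμ23 : μ₂ < μ₃ := Real.log_lt_log hlam₂ h23
  have hμ₂0 : μ₂ < 0 := Real.log_neg hlam₂ h21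
  set A : ℝ := max (Real.log (φ xm)) μ₃ with hA
  have hA2 : 0 < A - μ₂ := by
    have : μ₃ ≤ A := le_max_right _ _
    linarith
  have haA : ∀ (x : X) (k : ℕ), Real.log (φ (f^[k] x)) ≤ A := by
    intro x k
    refine le_trans ?_ (le_max_left _ _)
    rw [Real.log_le_log_iff (hφ _) (hφ _)]
    exact hxm (Set.mem_univ _)
  -- nonnegativity of the Birkhoff sums along b
  have hS0 : ∀ n : ℕ, 0 ≤ gS n b := by
    intro n
    rcases Nat.eq_zero_or_pos n with rfl | hn
    · simp [hgS]
    · rw [hglog]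
      exact Real.log_nonneg (hb n hn)
  set T : ℕ → ℝ := fun m => gS m b - (m : ℝ) * μ₂ with hT
  clear_value T
  -- existence of the next record
  have hex : ∀ u : ℕ, ∃ m : ℕ, u < m ∧ ∀ k, u ≤ k → k < m → T k ≤ T m := by
    intro u
    obtain ⟨K, hK⟩ := exists_nat_gt (max (T u / (-μ₂)) (u + 1))
    have hK1 : T u / (-μ₂) < K := lt_of_le_of_lt (le_max_left _ _) hK
    have hK2 : ((u : ℝ) + 1) < K := lt_of_le_of_lt (le_max_right _ _) hK
    have hKu : u + 1 ≤ K := by exact_mod_cast hK2.le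
    have hTK : T u < T K := by
      have h1 : T u < K * (-μ₂) := by
        rwa [div_lt_iff₀ (by linarith : (0:ℝ) < -μ₂)] at hK1
      have h2 : (K : ℝ) * (-μ₂) ≤ T K := by
        have h3 := hS0 K
        simp only [hT]; nlinarith
      linarith
    obtain ⟨m, hm, hmax⟩ := Finset.exists_max_image (Finset.Icc (u+1) K) T
      ⟨K, Finset.mem_Icc.mpr ⟨hKu, le_rfl⟩⟩
    have hm' := Finset.mem_Icc.mp hm
    refine ⟨m, by omega, ?_⟩
    intro k hk1 hk2
    rcases Nat.eq_or_lt_of_le hk1 with rfl | hlt'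
    · exact le_trans hTK.le (hmax K (Finset.mem_Icc.mpr ⟨hKu, le_rfl⟩))
    · exact hmax k (Finset.mem_Icc.mpr ⟨hlt', by omega⟩)
  -- the sequence of successive records (least next records)
  have hex' : ∀ u : ℕ, ∃ m : ℕ, (u < m ∧ ∀ k, u ≤ k → k < m → T k ≤ T m) ∧
      ∀ m', (u < m' ∧ ∀ k, u ≤ k → k < m' → T k ≤ T m') → m ≤ m' := by
    intro u
    obtain ⟨m, hm, hmin'⟩ := (Nat.lt_wfRel.wf).has_min
      {m | u < m ∧ ∀ k, u ≤ k → k < m → T k ≤ T m} ⟨(hex u).choose, (hex u).choose_spec⟩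
    exact ⟨m, hm, fun m' hm' => not_lt.mp (hmin' m' hm')⟩
  choose R hR1 hR2 using hex'
  obtain ⟨r, hr0, hrS⟩ : ∃ r : ℕ → ℕ, r 0 = 0 ∧ ∀ i, r (i+1) = R (r i) :=
    ⟨fun n => Nat.rec 0 (fun _ prev => R prev) n, rfl, fun i => rfl⟩
  have hrlt : ∀ i, r i < r (i+1) := by
    intro i; rw [hrS]; exact (hR1 (r i)).1
  have hrec : ∀ i k, r i ≤ k → k < r (i+1) → T k ≤ T (r (i+1)) := by
    intro i k h1 h2
    rw [hrS] at h2 ⊢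
    exact (hR1 (r i)).2 k h1 h2
  have hmin : ∀ i m, r i < m → m < r (i+1) → ∃ k, r i ≤ k ∧ k < m ∧ T m < T k := by
    intro i m h1 h2
    rw [hrS] at h2
    by_contra hcon
    push_neg at hcon
    have h3 : r i < m ∧ ∀ k, r i ≤ k → k < m → T k ≤ T m := ⟨h1, hcon⟩
    have := hR2 (r i) m h3
    omega
  have hcap : ∀ i k, r i ≤ k → k < r (i+1) → T k ≤ T (r i) := by
    intro i
    exact LiaoSift.cap_of_min T (r i) (r (i+1)) (hmin i)
  have hrmono : StrictMono r := strictMono_nat_of_lt_succ hrlt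
  have hTmono : ∀ i j, i ≤ j → T (r i) ≤ T (r j) := by
    intro i j hij
    induction j, hij using Nat.le_induction with
    | base => exact le_rfl
    | succ j hj ih => exact le_trans ih (hrec j (r j) le_rfl (hrlt j))
  have hrm : ∀ i m, r i + m ≤ r (i + m) := by
    intro i m
    induction m with
    | zero => simp
    | succ m ih =>
        have h := hrlt (i + m)
        have : i + (m + 1) = (i + m) + 1 := by omega
        rw [this]; omega
  set β : ℝ := μ₃ - μ₂ with hβdef
  have hβ : 0 < β := by rw [hβdef]; linarith
  set σfn : ℕ → ℝ := fun i => gS (r i) b - (Nat.cast (r i) : ℝ) * μ₃ with hσ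
  clear_value σfn
  set gfn : ℕ → ℕ := fun i => r (i+1) - r i with hgfn
  clear_value gfn
  have hσT : ∀ j, σfn j = T (r j) - (Nat.cast (r j) : ℝ) * β := by
    intro j; simp only [hσ, hT, hβdef]; ring
  have hTstep : ∀ i, T (r (i+1)) ≤ T (r i) + (A - μ₂) := by
    intro i
    have h1 : r i ≤ r (i+1) - 1 := by have := hrlt i; omega
    have h2 : r (i+1) - 1 < r (i+1) := by have := hrlt i; omega
    have h3 : T (r (i+1) - 1) ≤ T (r i) := hcap i _ h1 h2
    have h5 : r (i+1) = (r (i+1) - 1) + 1 := by have := hrlt i; omega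
    have h4 : T (r (i+1)) = T (r (i+1) - 1)
        + (Real.log (φ (f^[r (i+1) - 1] b)) - μ₂) := by
      simp only [hT]
      rw [h5]
      simp only [hgS]
      rw [Finset.sum_range_succ]
      push_cast
      ring
    have h6 := haA b (r (i+1) - 1)
    linarith
  have hstep : ∀ i, σfn (i+1) ≤ σfn i + (A - μ₂) - (gfn i : ℝ) * β := by
    intro i
    have h1 := hTstep i
    have hcast : ((gfn i : ℕ) : ℝ) = ((r (i+1) : ℕ) : ℝ) - ((r i : ℕ) : ℝ) := by
      simp only [hgfn]
      push_cast [Nat.cast_sub (hrlt i).le]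
      ring
    rw [hσT, hσT, hcast]
    nlinarith [h1]
  -- key compactness input: stretches of records with bounded gaps have bounded length
  have hSle : ∀ u v : ℕ, u ≤ v → gS v b - gS u b ≤ ((v - u : ℕ) : ℝ) * A := by
    intro u v huv
    rw [hIco b u v huv]
    have h := Finset.sum_le_card_nsmul (Finset.Ico u v)
      (fun i => Real.log (φ (f^[i] b))) A (fun i _ => haA b i)
    rwa [Nat.card_Ico, nsmul_eq_mul] at h
  have hP : ∀ G : ℕ, ∃ Z : ℕ, ∀ I M : ℕ,
      (∀ t, I ≤ t → t < I + M → gfn t ≤ G) → M ≤ Z := by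
    intro G
    by_contra hnP
    push_neg at hnP
    choose Ifn Mfn hIM1 hIM2 using hnP
    have hgpos : ∀ t, 1 ≤ gfn t := by
      intro t
      have h1 := hrlt t
      simp only [hgfn]
      omega
    have hG1 : 1 ≤ G := by
      have h0 := hIM2 0
      have h1 := hIM1 0 (Ifn 0) le_rfl (by omega)
      have h2 := hgpos (Ifn 0)
      omega
    obtain ⟨y, -, θ, hθmono, hθtend⟩ := isCompact_univ.tendsto_subseq
      (fun Z => Set.mem_univ (f^[r (Ifn Z)] b))
    -- the patch estimate along a stretch
    have EST : ∀ Z n : ℕ, n + G ≤ Mfn Z →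
        (n : ℝ) * μ₂ - G * (A - μ₂) ≤ gS (r (Ifn Z) + n) b - gS (r (Ifn Z)) b := by
      intro Z n hn
      have hspan : r (Ifn Z) + Mfn Z ≤ r (Ifn Z + Mfn Z) := hrm _ _
      have hu : r (Ifn Z) + n < r (Ifn Z + Mfn Z) := by omega
      obtain ⟨q, hq1, hq2⟩ := LiaoSift.locate r hr0 hrlt (r (Ifn Z) + n)
      have hqI : Ifn Z ≤ q := by
        have h1 : r (Ifn Z) < r (q+1) := by omega
        have h2 := (hrmono.lt_iff_lt (a := Ifn Z) (b := q+1)).mp h1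
        omega
      have hqM : q < Ifn Z + Mfn Z := by
        have h1 : r q < r (Ifn Z + Mfn Z) := by omega
        exact (hrmono.lt_iff_lt (a := q) (b := Ifn Z + Mfn Z)).mp h1
      have hgap : gfn q ≤ G := hIM1 Z q hqI hqM
      have hgfnq : gfn q = r (q+1) - r q := by simp only [hgfn]
      set u : ℕ := r (Ifn Z) + n with hudef
      clear_value u
      have hD1 : 1 ≤ r (q+1) - u := by omega
      have hD2 : r (q+1) - u ≤ G := by omega
      -- lower bound between records
      have hTlow : T (r (Ifn Z)) ≤ T (r (q+1)) := hTmono _ _ (by omega)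
      have hup : gS (r (q+1)) b - gS u b ≤ ((r (q+1) - u : ℕ) : ℝ) * A :=
        hSle u (r (q+1)) (by omega)
      simp only [hT] at hTlow
      have hcast1 : ((r (q+1) - u : ℕ) : ℝ) = (r (q+1) : ℝ) - u := by
        push_cast [Nat.cast_sub (by omega : u ≤ r (q+1))]; ring
      have hcast2 : (u : ℝ) = (r (Ifn Z) : ℝ) + n := by
        rw [hudef]; push_cast; ring
    -- combine
      have hG1 : ((r (q+1) - u : ℕ) : ℝ) ≤ G := by exact_mod_cast hD2
      rw [hcast1] at hup hG1
      nlinarith [hup, hTlow, hG1, hA2]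
    -- pass to the limit point y
    have hVest : ∀ n : ℕ, (n : ℝ) * μ₂ - G * (A - μ₂) ≤ gS n y := by
      intro n
      have hev : ∀ᶠ j in atTop,
          (n : ℝ) * μ₂ - G * (A - μ₂) ≤ gS n (f^[r (Ifn (θ j))] b) := by
        filter_upwards [eventually_ge_atTop (n + G)] with j hj
        have hMθ : n + G ≤ Mfn (θ j) := by
          have h1 := hIM2 (θ j)
          have h2 : j ≤ θ j := hθmono.le_apply
          omega
        have h3 := EST (θ j) n hMθ
        rw [hgshift b (r (Ifn (θ j))) n]
        exact h3
      exact ge_of_tendsto (((hgcont n).continuousAt).tendsto.comp hθtend) hev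
    -- the infimum trick to get an exact Pliss point in the limit
    set E : ℕ → ℝ := fun m => gS m y - m * μ₂ with hE
    clear_value E
    have hEb : ∀ m, -((G:ℝ) * (A - μ₂)) ≤ E m := by
      intro m
      have := hVest m
      simp only [hE]; linarith
    have hne : (Set.range E).Nonempty := ⟨E 0, 0, rfl⟩
    have hbdd : BddBelow (Set.range E) :=
      ⟨-((G:ℝ) * (A - μ₂)), by rintro x ⟨m, rfl⟩; exact hEb m⟩
    have hsel : ∀ k : ℕ, ∃ m : ℕ, E m < sInf (Set.range E) + 1/(k+1) := by
      intro k
      obtain ⟨x, ⟨m, rfl⟩, hx⟩ := Real.lt_sInf_add_pos hne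
        (by positivity : (0:ℝ) < 1/(k+1))
      exact ⟨m, hx⟩
    choose msel hmsel using hsel
    obtain ⟨z, -, θ₂, hθ₂mono, hθ₂tend⟩ := isCompact_univ.tendsto_subseq
      (fun k => Set.mem_univ (f^[msel k] y))
    have hzprem : ∀ n : ℕ, (n : ℝ) * μ₂ ≤ gS n z := by
      intro n
      refine le_of_forall_sub_le ?_
      intro ε hε
      obtain ⟨k₀, hk₀⟩ := exists_nat_gt (1/ε)
      have hk₀pos : 0 < (k₀ : ℝ) := lt_of_le_of_lt (by positivity) hk₀
      have hev : ∀ᶠ t in atTop,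
          (n : ℝ) * μ₂ - ε ≤ gS n (f^[msel (θ₂ t)] y) := by
        filter_upwards [eventually_ge_atTop k₀] with t ht
        have h1 : gS n (f^[msel (θ₂ t)] y)
            = E (msel (θ₂ t) + n) - E (msel (θ₂ t)) + n * μ₂ := by
          rw [hgshift y]; simp only [hE]; push_cast; ring
        have h2 : sInf (Set.range E) ≤ E (msel (θ₂ t) + n) := csInf_le hbdd ⟨_, rfl⟩
        have h3 := hmsel (θ₂ t)
        have h4 : 1/((θ₂ t : ℝ) + 1) ≤ ε := by
          have h5 : (k₀ : ℝ) ≤ (θ₂ t : ℝ) + 1 := by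
            have h6 : t ≤ θ₂ t := hθ₂mono.le_apply
            have : (k₀ : ℝ) ≤ t := by exact_mod_cast ht
            have h7 : (t : ℝ) ≤ θ₂ t := by exact_mod_cast h6
            linarith
          have h8 : 1/((θ₂ t : ℝ) + 1) ≤ 1/(k₀ : ℝ) := by
            apply one_div_le_one_div_of_le hk₀pos h5
          have h9 : 1/(k₀ : ℝ) ≤ ε := by
            rw [div_le_iff₀ hk₀pos]
            rw [div_lt_iff₀ hε] at hk₀
            linarith
          linarith
        rw [h1]
        linarith
      have := ge_of_tendsto (((hgcont n).continuousAt).tendsto.comp hθ₂tend) hev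
      linarith
    have hzprem' : ∀ n : ℕ, 1 ≤ n →
        lam₂ ^ n ≤ ∏ k ∈ Finset.range n, φ (f^[k] z) := by
      intro n hn
      have h1 : Real.log (lam₂ ^ n) ≤ Real.log (∏ k ∈ Finset.range n, φ (f^[k] z)) := by
        rw [Real.log_pow, ← hglog]
        exact hzprem n
      calc lam₂ ^ n = Real.exp (Real.log (lam₂ ^ n)) :=
            (Real.exp_log (by positivity)).symm
        _ ≤ Real.exp (Real.log (∏ k ∈ Finset.range n, φ (f^[k] z))) :=
            Real.exp_le_exp.mpr h1
        _ = ∏ k ∈ Finset.range n, φ (f^[k] z) := Real.exp_log (hprodpos z n)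
    obtain ⟨c, hcω, hcc⟩ := tilde z hzprem'
    -- a neighbourhood of c on which G-step products contract at rate lam'
    set lam' : ℝ := (lam₁ + lam₂)/2 with hlam'
    have hlam'1 : lam₁ < lam' := by rw [hlam']; linarith
    have hlam'2 : lam' < lam₂ := by rw [hlam']; linarith
    have hlam'0 : 0 < lam' := by linarith
    set U : Set X := ⋂ n ∈ Set.Icc 1 G,
      {x : X | ∏ k ∈ Finset.range n, φ (f^[k] x) < lam' ^ n} with hU
    have hUopen : IsOpen U := by
      refine Set.Finite.isOpen_biInter (Set.finite_Icc 1 G) ?_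
      intro n _
      exact isOpen_lt (continuous_finset_prod _ (fun i _ => hφc.comp (hf.iterate i)))
        continuous_const
    have hcU : c ∈ U := by
      rw [hU]
      refine Set.mem_iInter₂.mpr ?_
      intro n hn
      have h1 := hcc n hn.1
      have h2 : lam₁ ^ n < lam' ^ n :=
        pow_lt_pow_left₀ hlam'1 hlam₁.le (by have := hn.1; omega)
      exact lt_of_le_of_lt h1 h2
    obtain ⟨ns, hns1, hns2⟩ := hcω
    obtain ⟨k₁, hk₁⟩ := (hns2.eventually (hUopen.mem_nhds hcU)).exists
    set p := ns k₁ with hp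
    clear_value p
    have h2 : Tendsto (fun t => f^[p + msel (θ₂ t)] y) atTop (𝓝 (f^[p] z)) := by
      have h3 : Tendsto (fun t => f^[p] (f^[msel (θ₂ t)] y)) atTop (𝓝 (f^[p] z)) :=
        ((hf.iterate p).continuousAt).tendsto.comp hθ₂tend
      refine Tendsto.congr ?_ h3
      intro t
      exact (Function.iterate_add_apply f p (msel (θ₂ t)) y).symm
    obtain ⟨t₁, ht₁⟩ := (h2.eventually (hUopen.mem_nhds hk₁)).exists
    set M₁ := p + msel (θ₂ t₁) with hM₁
    clear_value M₁
    have h3 : Tendsto (fun j => f^[M₁ + r (Ifn (θ j))] b) atTop (𝓝 (f^[M₁] y)) := by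
      have h4 : Tendsto (fun j => f^[M₁] (f^[r (Ifn (θ j))] b)) atTop (𝓝 (f^[M₁] y)) :=
        ((hf.iterate M₁).continuousAt).tendsto.comp hθtend
      refine Tendsto.congr ?_ h4
      intro j
      exact (Function.iterate_add_apply f M₁ (r (Ifn (θ j))) b).symm
    obtain ⟨j₁, hj₁, hj₂⟩ :=
      ((h3.eventually (hUopen.mem_nhds ht₁)).and (eventually_ge_atTop (M₁ + G + 1))).exists
    -- now derive the contradiction: a visit inside a stretch
    set u : ℕ := r (Ifn (θ j₁)) + M₁ with hu
    clear_value u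
    have hub2 : f^[u] b ∈ U := by
      rw [hu, Nat.add_comm]
      exact hj₁
    have hMθ : M₁ + G < Mfn (θ j₁) := by
      have h5 := hIM2 (θ j₁)
      have h6 : j₁ ≤ θ j₁ := hθmono.le_apply
      omega
    have hspan : r (Ifn (θ j₁)) + Mfn (θ j₁) ≤ r (Ifn (θ j₁) + Mfn (θ j₁)) := hrm _ _
    have hult : u < r (Ifn (θ j₁) + Mfn (θ j₁)) := by omega
    obtain ⟨q, hq1, hq2⟩ := LiaoSift.locate r hr0 hrlt u
    have hqI : Ifn (θ j₁) ≤ q := by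
      have h1 : r (Ifn (θ j₁)) < r (q+1) := by omega
      have h2 := (hrmono.lt_iff_lt (a := Ifn (θ j₁)) (b := q+1)).mp h1
      omega
    have hqM : q < Ifn (θ j₁) + Mfn (θ j₁) := by
      have h1 : r q < r (Ifn (θ j₁) + Mfn (θ j₁)) := by omega
      exact (hrmono.lt_iff_lt (a := q) (b := Ifn (θ j₁) + Mfn (θ j₁))).mp h1
    have hgap : gfn q ≤ G := hIM1 (θ j₁) q hqI hqM
    set n₀ : ℕ := r (q+1) - u with hn₀
    clear_value n₀
    have hn₀1 : 1 ≤ n₀ := by omega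
    have hn₀G : n₀ ≤ G := by
      have hgfnq : gfn q = r (q+1) - r q := by simp only [hgfn]
      omega
    -- window inequality
    have hwin : ∏ k ∈ Finset.range n₀, φ (f^[k] (f^[u] b)) < lam' ^ n₀ := by
      rw [hU] at hub2
      exact Set.mem_iInter₂.mp hub2 n₀ ⟨hn₀1, hn₀G⟩
    have hwin2 : gS n₀ (f^[u] b) < n₀ * Real.log lam' := by
      have h1 : Real.log (∏ k ∈ Finset.range n₀, φ (f^[k] (f^[u] b)))
          < Real.log (lam' ^ n₀) := Real.log_lt_log (hprodpos _ _) hwin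
      rw [Real.log_pow] at h1
      rw [hglog]
      exact h1
    -- record inequality
    have hrecq : T u ≤ T (r (q+1)) := hrec q u hq1 hq2
    have hkey : ((n₀ : ℕ) : ℝ) * μ₂ ≤ gS (r (q+1)) b - gS u b := by
      simp only [hT] at hrecq
      have hcast : ((n₀ : ℕ) : ℝ) = (r (q+1) : ℝ) - u := by
        rw [hn₀]; push_cast [Nat.cast_sub (by omega : u ≤ r (q+1))]; ring
      rw [hcast]
      linarith [hrecq]
    rw [hgshift b u n₀] at hwin2
    have huadd : u + n₀ = r (q+1) := by omega
    rw [huadd] at hwin2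
    have hlog' : Real.log lam' < μ₂ := Real.log_lt_log hlam'0 hlam'2
    have hn₀pos : (0:ℝ) < (n₀ : ℝ) := by exact_mod_cast hn₀1
    have hmul : (n₀:ℝ) * Real.log lam' < (n₀:ℝ) * μ₂ :=
      mul_lt_mul_of_pos_left hlog' hn₀pos
    linarith [hwin2, hkey, hmul]
  -- now the staircase
  rcases Nat.lt_or_ge l 2 with hl | hl
  · refine ⟨fun j => j + 1, fun i j hij => by simpa using hij, by norm_num, ?_⟩
    intro j hj
    exact absurd hj (by omega)
  obtain ⟨F, hF⟩ := LiaoSift.stair_abstract σfn gfn (A - μ₂) β hβ hA2.le hstep hP l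
  obtain ⟨s, hs1, hs2, hs3⟩ := hF 1
  set nfn : ℕ → ℕ := fun j => if j < l then r (s j) else r (s (l-1)) + (j + 1 - l)
    with hnfn
  clear_value nfn
  have hnval : ∀ j, j < l → nfn j = r (s j) := by
    intro j hj; rw [hnfn]; simp [hj]
  have hnval2 : ∀ j, ¬ (j < l) → nfn j = r (s (l-1)) + (j + 1 - l) := by
    intro j hj; rw [hnfn]; simp [hj]
  refine ⟨nfn, ?_, ?_, ?_⟩
  · apply strictMono_nat_of_lt_succ
    intro j
    rcases lt_trichotomy (j+1) l with h | h | h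
    · rw [hnval j (by omega), hnval (j+1) h]
      exact hrmono (hs2 j h)
    · rw [hnval j (by omega), hnval2 (j+1) (by omega)]
      have hj : j = l - 1 := by omega
      rw [hj]
      omega
    · rw [hnval2 j (by omega), hnval2 (j+1) (by omega)]
      omega
  · rw [hnval 0 (by omega)]
    have h1 : 1 ≤ s 0 := (hs1 0 (by omega)).1
    have h2 : r 1 ≤ r (s 0) := hrmono.monotone h1
    have h3 : r 0 < r 1 := hrlt 0
    omega
  · intro j hjl k hk1 hk2
    have hjl' : j < l := by omega
    rw [hnval j hjl'] at hk1 ⊢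
    rw [hnval (j+1) hjl] at hk2 ⊢
    have hss : s j < s (j+1) := hs2 j hjl
    have hdom := hs3 j hjl
    -- abbreviations
    set uu : ℕ := r (s j) with huu
    set vv : ℕ := r (s (j+1)) with hvv
    have huv : uu < vv := hrmono hss
    have hk1' : uu + 1 ≤ k := hk1
    have hk2' : k ≤ vv := hk2
    have hprodIco : ∀ u' v' : ℕ, u' ≤ v' →
        ∏ i ∈ Finset.Ico u' v', φ (f^[i] b) = Real.exp (gS v' b - gS u' b) := by
      intro u' v' h
      rw [hIco b u' v' h]
      rw [Real.exp_sum]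
      refine Finset.prod_congr rfl ?_
      intro i _
      rw [Real.exp_log (hφ _)]
    constructor
    · -- contraction from the left
      have hIccIco : Finset.Icc uu (k-1) = Finset.Ico uu k := by
        rw [← Finset.Ico_add_one_right_eq_Icc]
        congr 1
        omega
      rw [hIccIco, hprodIco uu k (by omega)]
      -- σ-level bound
      have key1 : gS k b - (k:ℝ) * μ₃ ≤ gS uu b - (uu:ℝ) * μ₃ := by
        rcases eq_or_lt_of_le hk2' with rfl | hklt
        · have h1 : σfn (s (j+1)) ≤ σfn (s j) := hdom (s (j+1)) hss le_rfl
          simp only [hσ] at h1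
          exact h1
        · obtain ⟨m, hm1, hm2⟩ := LiaoSift.locate r hr0 hrlt k
          have hmsj : s j ≤ m := by
            have h1 : r (s j) < r (m+1) := by omega
            have h2 := (hrmono.lt_iff_lt (a := s j) (b := m+1)).mp h1
            omega
          have hmsj1 : m < s (j+1) := by
            have h1 : r m < r (s (j+1)) := by omega
            exact (hrmono.lt_iff_lt (a := m) (b := s (j+1))).mp h1
          have h2 : T k ≤ T (r m) := hcap m k hm1 hm2
          have h3 : σfn m ≤ σfn (s j) := by
            rcases eq_or_lt_of_le hmsj with rfl | hmlt
            · exact le_rfl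
            · exact hdom m hmlt (by omega)
          simp only [hσ] at h3
          simp only [hT] at h2
          have h4 : (r m : ℝ) ≤ k := by exact_mod_cast hm1
          -- gS k b - k μ₃ = (gS k b - k μ₂) - k β ≤ (gS (r m) b - r m μ₂) - k β
          --              ≤ gS (r m) b - r m μ₂ - r m β = σfn m
          have hβ' : 0 < β := hβ
          rw [hβdef] at hβ'
          nlinarith [h2, h3, h4]
      have key2 : gS k b - gS uu b ≤ ((k - uu : ℕ) : ℝ) * μ₃ := by
        have hcast : ((k - uu : ℕ) : ℝ) = (k : ℝ) - uu := by
          push_cast [Nat.cast_sub (by omega : uu ≤ k)]; ring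
        rw [hcast]
        nlinarith [key1]
      calc Real.exp (gS k b - gS uu b) ≤ Real.exp (((k - uu : ℕ) : ℝ) * μ₃) :=
            Real.exp_le_exp.mpr key2
        _ = lam₃ ^ (k - uu) := by
            rw [hμ₃, ← Real.log_pow, Real.exp_log (by positivity)]
    · -- expansion into the right endpoint
      have hIccIco : Finset.Icc (k-1) (vv-1) = Finset.Ico (k-1) vv := by
        rw [← Finset.Ico_add_one_right_eq_Icc]
        congr 1
        omega
      rw [hIccIco, hprodIco (k-1) vv (by omega)]
      obtain ⟨m, hm1, hm2⟩ := LiaoSift.locate r hr0 hrlt (k-1)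
      have hmsj : s j ≤ m := by
        have h1 : r (s j) < r (m+1) := by omega
        have h2 := (hrmono.lt_iff_lt (a := s j) (b := m+1)).mp h1
        omega
      have hmsj1 : m < s (j+1) := by
        have h1 : r m < r (s (j+1)) := by omega
        exact (hrmono.lt_iff_lt (a := m) (b := s (j+1))).mp h1
      have h2 : T (k-1) ≤ T (r m) := hcap m (k-1) hm1 hm2
      have h3 : T (r m) ≤ T vv := hTmono m (s (j+1)) (by omega)
      have h4 : T (k-1) ≤ T vv := le_trans h2 h3
      simp only [hT] at h4
      have key3 : ((vv - k + 1 : ℕ) : ℝ) * μ₂ ≤ gS vv b - gS (k-1) b := by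
        have hcast : ((vv - k + 1 : ℕ) : ℝ) = (vv : ℝ) - ((k:ℝ) - 1) := by
          have h5 : vv - k + 1 = vv - (k-1) := by omega
          rw [h5]
          push_cast [Nat.cast_sub (by omega : k - 1 ≤ vv)]
          have h6 : ((k - 1 : ℕ) : ℝ) = (k : ℝ) - 1 := by
            push_cast [Nat.cast_sub (by omega : 1 ≤ k)]; ring
          rw [h6]
        rw [hcast]
        have h6 : ((k - 1 : ℕ) : ℝ) = (k : ℝ) - 1 := by
          push_cast [Nat.cast_sub (by omega : 1 ≤ k)]; ring
        nlinarith [h4, h6.symm.le, h6.le]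
      calc lam₂ ^ (vv - k + 1)
            = Real.exp (((vv - k + 1 : ℕ) : ℝ) * μ₂) := by
            rw [hμ₂, ← Real.log_pow, Real.exp_log (by positivity)]
        _ ≤ Real.exp (gS vv b - gS (k-1) b) := Real.exp_le_exp.mpr key3
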